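/- The group with presentation ⟨a, b | a^3 = 1, b^5 = 1, (aba^{-1}b^{-1}ab^2)^2 = 1, (ab)^2 = 1⟩ is trivial. -/

import Mathlib

/-- Auxiliary: in any group, the four relations force triviality. -/
lemma key_triangle {G : Type*} [Group G] (x y : G) (ha : x^3 = 1) (hb : y^5 = 1)
    (hw : (x*y*x⁻¹*y⁻¹*x*y^2)^2 = 1) (hab : (x*y)^2 = 1) : x = 1 ∧ y = 1 := by
  have ha' : x*x*x = 1 := by
    calc x*x*x = x^3 := by rw [pow_succ, pow_two]
    _ = 1 := ha
  have hb' : y*y*y*y*y = 1 := by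
    calc y*y*y*y*y = y^5 := by rw [pow_succ, pow_succ, pow_succ, pow_two]
    _ = 1 := hb
  have hab' : x*y*(x*y) = 1 := by rw [pow_two] at hab; exact hab
  have hw' : (x*y*x⁻¹*y⁻¹*x*(y*y))*(x*y*x⁻¹*y⁻¹*x*(y*y)) = 1 := by
    rw [← pow_two y, ← pow_two]; exact hw
  have s1 : x*y*x = y⁻¹ := by
    calc x*y*x = x*y*(x*y) * y⁻¹ := by group
    _ = 1 * y⁻¹ := by rw [hab']
    _ = y⁻¹ := one_mul _
  have s2 : x*y⁻¹ = x⁻¹*y*x := by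
    rw [← s1]
    calc x*(x*y*x) = x⁻¹*(x*x*x)*y*x := by group
    _ = x⁻¹*(1:G)*y*x := by rw [ha']
    _ = x⁻¹*y*x := by group
  have s0 : x*y = y⁻¹*x⁻¹ := by
    calc x*y = x*y*(x*y) * (y⁻¹*x⁻¹) := by group
    _ = 1 * (y⁻¹*x⁻¹) := by rw [hab']
    _ = y⁻¹*x⁻¹ := one_mul _
  have s2inv : y*x⁻¹ = x⁻¹*y⁻¹*x := by
    calc y*x⁻¹ = (x*y⁻¹)⁻¹ := by group
    _ = (x⁻¹*y*x)⁻¹ := by rw [s2]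
    _ = x⁻¹*y⁻¹*x := by group
  have sw : x*y*x⁻¹*y⁻¹*x*(y*y) = y⁻¹*x⁻¹*y*x⁻¹*(y*y) := by
    calc x*y*x⁻¹*y⁻¹*x*(y*y) = (x*y)*(x⁻¹*y⁻¹*x*(y*y)) := by group
    _ = (y⁻¹*x⁻¹)*(x⁻¹*y⁻¹*x*(y*y)) := by rw [s0]
    _ = y⁻¹ * (x*x*x)⁻¹ * (x*y⁻¹) * (x*(y*y)) := by group
    _ = y⁻¹ * (1:G)⁻¹ * (x⁻¹*y*x) * (x*(y*y)) := by rw [ha', s2]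
    _ = y⁻¹*x⁻¹*y*x⁻¹*(x*x*x)*(y*y) := by group
    _ = y⁻¹*x⁻¹*y*x⁻¹*(1:G)*(y*y) := by rw [ha']
    _ = y⁻¹*x⁻¹*y*x⁻¹*(y*y) := by group
  have hw2 : (y⁻¹*x⁻¹*y*x⁻¹*(y*y))*(y⁻¹*x⁻¹*y*x⁻¹*(y*y)) = 1 := by rw [← sw]; exact hw'
  have sA : x⁻¹*y*(x⁻¹*y)*(x⁻¹*y) = y⁻¹*x := by
    calc x⁻¹*y*(x⁻¹*y)*(x⁻¹*y)
        = y * ((y⁻¹*x⁻¹*y*x⁻¹*(y*y))*(y⁻¹*x⁻¹*y*x⁻¹*(y*y))) * (y⁻¹*y⁻¹*x) := by group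
    _ = y * 1 * (y⁻¹*y⁻¹*x) := by rw [hw2]
    _ = y⁻¹*x := by group
  have sLHS : x⁻¹*y*(x⁻¹*y)*(x⁻¹*y) = x*y⁻¹*y⁻¹*x*y := by
    calc x⁻¹*y*(x⁻¹*y)*(x⁻¹*y) = x⁻¹*(y*x⁻¹)*(y*x⁻¹)*y := by group
    _ = x⁻¹*(x⁻¹*y⁻¹*x)*(x⁻¹*y⁻¹*x)*y := by rw [s2inv]
    _ = x*(x*x*x)⁻¹*y⁻¹*y⁻¹*x*y := by group
    _ = x*(1:G)⁻¹*y⁻¹*y⁻¹*x*y := by rw [ha']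
    _ = x*y⁻¹*y⁻¹*x*y := by group
  have sB : x*y⁻¹*y⁻¹*x*y = y⁻¹*x := by rw [← sLHS]; exact sA
  have sC : x*(y*y*y)*x = y⁻¹*x*y⁻¹ := by
    calc x*(y*y*y)*x = (x*y⁻¹*y⁻¹*x*y) * y⁻¹ * x⁻¹ * (y*y*y*y*y) * x := by simp only [mul_assoc, inv_mul_cancel_left, mul_inv_cancel_left]
    _ = (y⁻¹*x) * y⁻¹ * x⁻¹ * (1:G) * x := by rw [sB, hb']
    _ = y⁻¹*x*y⁻¹ := by group
  have sD : (x⁻¹*y*x)*(x⁻¹*y*x) = x*y⁻¹ := by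
    calc (x⁻¹*y*x)*(x⁻¹*y*x) = (x*y*x)⁻¹ * (x*(y*y*y)*x) := by group
    _ = (y⁻¹)⁻¹ * (y⁻¹*x*y⁻¹) := by rw [s1, sC]
    _ = x*y⁻¹ := by group
  have sE : (x⁻¹*y*x)*(x⁻¹*y*x) = x⁻¹*y*x := by rw [s2] at sD; exact sD
  have hc : x⁻¹*y*x = 1 := mul_eq_left.mp sE
  have hy : y = 1 := by
    calc y = x*(x⁻¹*y*x)*x⁻¹ := by group
    _ = x*1*x⁻¹ := by rw [hc]
    _ = 1 := by group
  have hx : x = 1 := by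
    have h2 : x*x = 1 := by
      have := hab'
      rw [hy] at this
      calc x*x = x*1*(x*1) := by group
      _ = 1 := this
    calc x = (x*x*x) * (x*x)⁻¹ := by group
    _ = 1 * (1:G)⁻¹ := by rw [ha', h2]
    _ = 1 := by group
  exact ⟨hx, hy⟩

/-- The relators (with (ab)² = 1 added) of ⟨a, b | a^3 = b^5 = (aba⁻¹b⁻¹ab²)² = 1, (ab)² = 1⟩. -/
def Trels : Set (FreeGroup (Fin 2)) :=
  {(FreeGroup.of 0) ^ 3, (FreeGroup.of 1) ^ 5,
   (FreeGroup.of 0 * FreeGroup.of 1 * (FreeGroup.of 0)⁻¹ * (FreeGroup.of 1)⁻¹ *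
     FreeGroup.of 0 * (FreeGroup.of 1) ^ 2) ^ 2,
   (FreeGroup.of 0 * FreeGroup.of 1) ^ 2}

/-- The corresponding presented group. -/
abbrev T : Type := PresentedGroup Trels
/-- Adding the relation (ab)² = 1 to the generalized triangle group gives the trivial group. -/
theorem triangle_group_ab2_trivial : Subsingleton T := by
  have hrel : ∀ r ∈ Trels, PresentedGroup.mk Trels r = 1 := fun r hr =>
    (QuotientGroup.eq_one_iff r).2 (Subgroup.subset_normalClosure hr)
  have ha : (PresentedGroup.of (0 : Fin 2) : T)^3 = 1 := by
    have := hrel _ (show (FreeGroup.of 0)^3 ∈ Trels by simp [Trels])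
    simpa [PresentedGroup.of, map_pow] using this
  have hb : (PresentedGroup.of (1 : Fin 2) : T)^5 = 1 := by
    have := hrel _ (show (FreeGroup.of 1)^5 ∈ Trels by simp [Trels])
    simpa [PresentedGroup.of, map_pow] using this
  have hw : ((PresentedGroup.of 0 : T) * PresentedGroup.of 1 * (PresentedGroup.of 0)⁻¹ *
      (PresentedGroup.of 1)⁻¹ * PresentedGroup.of 0 * (PresentedGroup.of 1)^2)^2 = 1 := by
    have := hrel _ (show (FreeGroup.of 0 * FreeGroup.of 1 * (FreeGroup.of 0)⁻¹ *
      (FreeGroup.of 1)⁻¹ * FreeGroup.of 0 * (FreeGroup.of 1) ^ 2) ^ 2 ∈ Trels by simp [Trels])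
    simpa [PresentedGroup.of, map_pow, map_mul, map_inv] using this
  have hab : ((PresentedGroup.of 0 : T) * PresentedGroup.of 1)^2 = 1 := by
    have := hrel _ (show (FreeGroup.of 0 * FreeGroup.of 1) ^ 2 ∈ Trels by simp [Trels])
    simpa [PresentedGroup.of, map_pow, map_mul] using this
  obtain ⟨hx, hy⟩ := key_triangle (PresentedGroup.of 0 : T) (PresentedGroup.of 1) ha hb hw hab
  have hone : ∀ z : T, z = 1 := by
    intro z
    induction z using PresentedGroup.induction_on with
    | _ w =>
      induction w using FreeGroup.induction_on with
      | C1 => exact map_one _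
      | of i =>
        fin_cases i
        · exact hx
        · exact hy
      | inv_of i h => rw [map_inv, h, inv_one]
      | mul u v hu hv => rw [map_mul, hu, hv, one_mul]
  exact ⟨fun a b => by rw [hone a, hone b]⟩
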